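/- For every integer k ≥ 4, the threshold d*(k) is not an integer. -/

import Mathlib

noncomputable def binEnt (p : ℝ) : ℝ := -p * Real.log p - (1 - p) * Real.log (1 - p)

noncomputable def dstar (k : ℕ) : ℝ :=
  (k : ℝ) * binEnt (2 / k) /
    ((k : ℝ) * binEnt (2 / k) + Real.log (2 / ((k : ℝ) * ((k : ℝ) - 1))))

lemma nat_log_eq {a b : ℕ} (ha : 0 < a) (hb : 0 < b) (h : Real.log a = Real.log b) : a = b := by
  have h' : (a : ℝ) = b := by
    rw [← Real.exp_log (by exact_mod_cast ha : (0:ℝ) < (a:ℝ)),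
        ← Real.exp_log (by exact_mod_cast hb : (0:ℝ) < (b:ℝ)), h]
  exact_mod_cast h'

lemma key (k a b c d : ℕ) (hk : 4 ≤ k) (hd : 1 ≤ d)
    (h : (a:ℝ) * Real.log (k:ℝ) =
      (b:ℝ) * Real.log 2 + (c:ℝ) * Real.log (((k-2 : ℕ)):ℝ) + (d:ℝ) * Real.log (((k-1 : ℕ)):ℝ)) :
    False := by
  have hk2 : 0 < k - 2 := by omega
  have hk1 : 0 < k - 1 := by omega
  have h2 : (0:ℝ) < ((k-2:ℕ):ℝ) := by exact_mod_cast hk2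
  have h1 : (0:ℝ) < ((k-1:ℕ):ℝ) := by exact_mod_cast hk1
  have hK : (0:ℝ) < (k:ℝ) := by positivity
  have hnat : k ^ a = 2 ^ b * (k-2) ^ c * (k-1) ^ d := by
    apply nat_log_eq (pow_pos (by omega) a) (by positivity)
    push_cast
    rw [Real.log_pow, Real.log_mul (by positivity) (by positivity),
        Real.log_mul (by positivity) (by positivity),
        Real.log_pow, Real.log_pow, Real.log_pow]
    linear_combination h
  have hdvd : (k - 1) ∣ k ^ a := by
    rw [hnat]
    exact Dvd.dvd.mul_left (dvd_pow_self (k-1) (by omega)) _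
  have hcop : Nat.Coprime (k - 1) k := by
    rw [show k = (k-1) + 1 by omega]
    exact Nat.coprime_self_add_right.mpr (Nat.coprime_one_right _)
  have := Nat.Coprime.eq_one_of_dvd (hcop.pow_right a) hdvd
  omega

lemma key0 (k : ℕ) (hk : 4 ≤ k)
    (h : (k:ℝ) * Real.log (k:ℝ) = 2 * Real.log 2 + ((k-2:ℕ):ℝ) * Real.log (((k-2 : ℕ)):ℝ)) :
    False := by
  have hk2 : 0 < k - 2 := by omega
  have h2 : (0:ℝ) < ((k-2:ℕ):ℝ) := by exact_mod_cast hk2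
  have hnat : k ^ k = 2 ^ 2 * (k-2) ^ (k-2) := by
    apply nat_log_eq (pow_pos (by omega) k) (by positivity)
    rw [Nat.cast_pow, Nat.cast_mul, Nat.cast_pow, Nat.cast_pow,
        Real.log_pow, Real.log_mul (by positivity) (by positivity),
        Real.log_pow, Real.log_pow]
    push_cast
    linear_combination h
  have h1 : (k-2)^(k-2) ≤ k^(k-2) := Nat.pow_le_pow_left (by omega) _
  have h2' : k ^ k = k ^ 2 * k ^ (k-2) := by
    rw [← pow_add]; congr 1; omega
  have h3 : 0 < (k-2)^(k-2) := pow_pos (by omega) _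
  have h4 : 16 ≤ k ^ 2 := by nlinarith
  nlinarith [hnat, h1, h2', h3, h4]

theorem stmt_3 (k : ℕ) (hk : 4 ≤ k) : ¬ ∃ n : ℤ, dstar k = (n : ℝ) := by
  rintro ⟨n, hn⟩
  have hK4 : (4:ℝ) ≤ (k:ℝ) := by exact_mod_cast hk
  have hK0 : (k:ℝ) ≠ 0 := by linarith
  have hK1 : (k:ℝ) - 1 ≠ 0 := by linarith
  have hK2 : (k:ℝ) - 2 ≠ 0 := by linarith
  have hc2 : ((k-2:ℕ):ℝ) = (k:ℝ) - 2 := by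
    have h' : ((k-2:ℕ):ℝ) = (k:ℝ) - ((2:ℕ):ℝ) := Nat.cast_sub (by omega)
    simpa using h'
  have hc1 : ((k-1:ℕ):ℝ) = (k:ℝ) - 1 := by
    have h' : ((k-1:ℕ):ℝ) = (k:ℝ) - ((1:ℕ):ℝ) := Nat.cast_sub (by omega)
    simpa using h'
  set lk := Real.log (k:ℝ) with hlk
  set l2 := Real.log 2 with hl2
  set lk2 := Real.log ((k:ℝ) - 2) with hlk2
  set lk1 := Real.log ((k:ℝ) - 1) with hlk1
  have hA : (k:ℝ) * binEnt (2/(k:ℝ)) = (k:ℝ)*lk - 2*l2 - ((k:ℝ)-2)*lk2 := by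
    have h1 : (1 : ℝ) - 2/(k:ℝ) = ((k:ℝ)-2)/(k:ℝ) := by field_simp
    rw [binEnt, h1, Real.log_div two_ne_zero hK0, Real.log_div hK2 hK0]
    rw [hlk, hl2, hlk2]
    field_simp
    ring
  have hB : Real.log (2/((k:ℝ)*((k:ℝ)-1))) = l2 - lk - lk1 := by
    rw [Real.log_div two_ne_zero (mul_ne_zero hK0 hK1), Real.log_mul hK0 hK1]
    ring
  rw [dstar, hA, hB] at hn
  -- the denominator is nonzero
  have hDne : ((k:ℝ)*lk - 2*l2 - ((k:ℝ)-2)*lk2) + (l2 - lk - lk1) ≠ 0 := by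
    intro h0
    apply key k (k-1) 1 (k-2) 1 hk le_rfl
    rw [hc1, hc2, ← hlk, ← hlk2, ← hlk1, ← hl2]
    linear_combination h0
  rw [div_eq_iff hDne] at hn
  -- hn : A = n * (A + D0)
  rcases lt_trichotomy n 0 with hneg | h0 | hpos
  · -- n ≤ -1 : with q = -n ≥ 1, (1+q)A + q D0 = 0
    obtain ⟨q, hq, hq1⟩ : ∃ q : ℕ, (n:ℝ) = -(q:ℝ) ∧ 1 ≤ q := by
      refine ⟨(-n).toNat, ?_, by omega⟩
      have hz : (((-n).toNat : ℤ) : ℝ) = ((-n : ℤ) : ℝ) := by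
        exact_mod_cast congrArg (fun z : ℤ => (z:ℝ)) (Int.toNat_of_nonneg (by omega : (0:ℤ) ≤ -n))
      push_cast at hz ⊢
      linarith
    rw [hq] at hn
    apply key k (k + q*(k-1)) (q+2) ((1+q)*(k-2)) q hk hq1
    rw [hc1, hc2, ← hlk, ← hlk2, ← hlk1, ← hl2]
    push_cast [Nat.cast_sub (show 1 ≤ k by omega), Nat.cast_sub (show 2 ≤ k by omega)]
    linear_combination hn
  · rw [h0] at hn
    push_cast at hn
    apply key0 k hk
    rw [hc2, ← hlk, ← hlk2, ← hl2]
    linear_combination hn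
  · rcases eq_or_lt_of_le (Int.add_one_le_of_lt hpos) with h1 | h2
    · -- n = 1 : B = 0
      rw [← h1] at hn
      push_cast at hn
      have hB0 : l2 = lk + lk1 := by linarith
      have h12 : (2 : ℕ) = k * (k-1) := by
        apply nat_log_eq (by norm_num) (Nat.mul_pos (by omega) (by omega))
        push_cast [hc1]
        rw [Real.log_mul hK0 hK1, ← hlk, ← hlk1]
        exact hB0
      have : 12 ≤ k * (k - 1) := le_trans (by norm_num) (Nat.mul_le_mul hk (by omega : 3 ≤ k - 1))
      omega
    · -- n ≥ 2 : n = m + 1 with m ≥ 1, m A + (m+1) D0 = 0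
      obtain ⟨m, hm, hm1⟩ : ∃ m : ℕ, (n:ℝ) = (m:ℝ) + 1 ∧ 1 ≤ m := by
        refine ⟨(n-1).toNat, ?_, by omega⟩
        have hz : (((n-1).toNat : ℤ) : ℝ) = ((n - 1 : ℤ) : ℝ) := by
          exact_mod_cast congrArg (fun z : ℤ => (z:ℝ)) (Int.toNat_of_nonneg (by omega : (0:ℤ) ≤ n - 1))
        push_cast at hz ⊢
        linarith
      rw [hm] at hn
      have hmk : 1 ≤ m * (k-1) := Nat.one_le_iff_ne_zero.mpr (Nat.mul_ne_zero (by omega) (by omega))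
      apply key k (m*(k-1) - 1) (m-1) (m*(k-2)) (m+1) hk (by omega)
      rw [hc1, hc2, ← hlk, ← hlk2, ← hlk1, ← hl2]
      push_cast [Nat.cast_sub hmk, Nat.cast_sub (show 1 ≤ k by omega),
        Nat.cast_sub (show 2 ≤ k by omega), Nat.cast_sub hm1]
      linear_combination -hn
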